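/- Let F: F' → F be a fully faithful map between essentially small Hom-finite Frobenius categories linear over a finite field. Then the induced linear map F_*: H(F') → H(F), [M] ↦ [F(M)], between Hall algebras is an injective homomorphism of algebras. -/

import Mathlib

/-!
Common definitions for formalizing "semi-derived Hall algebras" (Gorsky, arXiv:1409.6798):
Quillen exact structures, Frobenius categories, conflations and (Yoneda-style) `Ext`-sets,
Hall algebra structure constants, stable categories, suspension/syzygy data,
Grothendieck groups, and localizations of Hall algebras.
-/

open CategoryTheory CategoryTheory.Limits ZeroObject

universe w v u v' u'

namespace HallPaper

section IsoClasses

variable {𝒞 : Type u} [Category.{v} 𝒞] {𝒟 : Type u'} [Category.{v'} 𝒟]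

/-- The set of isomorphism classes of objects of a category. -/
def IsoCl (𝒞 : Type u) [Category.{v} 𝒞] : Type u :=
  Quotient (isIsomorphicSetoid 𝒞)

/-- The isomorphism class of an object. -/
def skel (A : 𝒞) : IsoCl 𝒞 := Quotient.mk (isIsomorphicSetoid 𝒞) A

/-- The basis vector of the Hall module (the `ℚ`-vector space with basis the isomorphism
classes of objects) corresponding to an object. -/
noncomputable def hallBasis (A : 𝒞) : IsoCl 𝒞 →₀ ℚ := Finsupp.single (skel A) 1

/-- The map on isomorphism classes induced by a functor. -/
def skelMap (F : 𝒞 ⥤ 𝒟) : IsoCl 𝒞 → IsoCl 𝒟 :=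
  @Quotient.map _ _ (isIsomorphicSetoid 𝒞) (isIsomorphicSetoid 𝒟) F.obj
    (fun _ _ h => h.elim fun e => ⟨F.mapIso e⟩)

/-- The `ℚ`-linear map between Hall modules induced by a functor,
`[M] ↦ [F(M)]` on basis vectors. -/
noncomputable def hallMap (F : 𝒞 ⥤ 𝒟) : (IsoCl 𝒞 →₀ ℚ) →ₗ[ℚ] (IsoCl 𝒟 →₀ ℚ) :=
  Finsupp.lmapDomain ℚ ℚ (skelMap F)

end IsoClasses

/-- A Quillen exact structure on an additive category, given by the class of conflations
(admissible short exact sequences) `X ↣ Y ↠ Z`, encoded as the predicate `conf i p`. -/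
structure ExactStructure (𝒞 : Type u) [Category.{v} 𝒞] [Preadditive 𝒞] [HasZeroObject 𝒞]
    [HasBinaryBiproducts 𝒞] where
  /-- `conf i p` says that `X ↣ Y ↠ Z` is a conflation. -/
  conf : ∀ {X Y Z : 𝒞}, (X ⟶ Y) → (Y ⟶ Z) → Prop
  comp_zero : ∀ {X Y Z : 𝒞} {i : X ⟶ Y} {p : Y ⟶ Z}, conf i p → i ≫ p = 0
  is_kernel : ∀ {X Y Z : 𝒞} {i : X ⟶ Y} {p : Y ⟶ Z} (h : conf i p),
    Nonempty (IsLimit (KernelFork.ofι i (comp_zero h)))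
  is_cokernel : ∀ {X Y Z : 𝒞} {i : X ⟶ Y} {p : Y ⟶ Z} (h : conf i p),
    Nonempty (IsColimit (CokernelCofork.ofπ p (comp_zero h)))
  conf_iso : ∀ {X Y Z X' Y' Z' : 𝒞} {i : X ⟶ Y} {p : Y ⟶ Z}
    (eX : X ≅ X') (eY : Y ≅ Y') (eZ : Z ≅ Z') {i' : X' ⟶ Y'} {p' : Y' ⟶ Z'},
    conf i p → i ≫ eY.hom = eX.hom ≫ i' → p ≫ eZ.hom = eY.hom ≫ p' → conf i' p'
  split_conf : ∀ X Y : 𝒞, conf (biprod.inl : X ⟶ X ⊞ Y) (biprod.snd : X ⊞ Y ⟶ Y)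
  infl_comp : ∀ {X Y Z : 𝒞} (i : X ⟶ Y) (j : Y ⟶ Z),
    (∃ (W : 𝒞) (p : Y ⟶ W), conf i p) → (∃ (W : 𝒞) (p : Z ⟶ W), conf j p) →
    ∃ (W : 𝒞) (p : Z ⟶ W), conf (i ≫ j) p
  defl_comp : ∀ {X Y Z : 𝒞} (p : X ⟶ Y) (q : Y ⟶ Z),
    (∃ (W : 𝒞) (i : W ⟶ X), conf i p) → (∃ (W : 𝒞) (i : W ⟶ Y), conf i q) →
    ∃ (W : 𝒞) (i : W ⟶ X), conf i (p ≫ q)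
  pushout_infl : ∀ {X Y Z X' : 𝒞} {i : X ⟶ Y} {p : Y ⟶ Z}, conf i p → ∀ f : X ⟶ X',
    ∃ (Y' : 𝒞) (i' : X' ⟶ Y') (g : Y ⟶ Y'), IsPushout i f g i' ∧
      ∃ (W : 𝒞) (p' : Y' ⟶ W), conf i' p'
  pullback_defl : ∀ {X Y Z Z' : 𝒞} {i : X ⟶ Y} {p : Y ⟶ Z}, conf i p → ∀ f : Z' ⟶ Z,
    ∃ (Y' : 𝒞) (p' : Y' ⟶ Z') (g : Y' ⟶ Y), IsPullback g p' p f ∧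
      ∃ (W : 𝒞) (i' : W ⟶ Y'), conf i' p'

section Exact

variable {𝒞 : Type u} [Category.{v} 𝒞] [Preadditive 𝒞] [HasZeroObject 𝒞] [HasBinaryBiproducts 𝒞]

/-- An object `P` is projective (relative to an exact structure) if any morphism from `P`
lifts along every deflation. Equivalently, `Ext¹(P, -) = 0`. -/
def ExactStructure.Proj (E : ExactStructure 𝒞) (P : 𝒞) : Prop :=
  ∀ ⦃X Y Z : 𝒞⦄ (i : X ⟶ Y) (p : Y ⟶ Z), E.conf i p → ∀ f : P ⟶ Z, ∃ g : P ⟶ Y, g ≫ p = f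

/-- An object `I` is injective (relative to an exact structure) if any morphism to `I`
extends along every inflation. Equivalently, `Ext¹(-, I) = 0`. -/
def ExactStructure.Inj (E : ExactStructure 𝒞) (I : 𝒞) : Prop :=
  ∀ ⦃X Y Z : 𝒞⦄ (i : X ⟶ Y) (p : Y ⟶ Z), E.conf i p → ∀ f : X ⟶ I, ∃ g : Y ⟶ I, i ≫ g = f

/-- A Frobenius category: an exact category with enough projectives and enough injectives,
in which the projective objects coincide with the injective objects. -/
structure IsFrobenius (E : ExactStructure 𝒞) : Prop where
  enough_proj : ∀ X : 𝒞, ∃ (P W : 𝒞) (i : W ⟶ P) (p : P ⟶ X), E.Proj P ∧ E.conf i p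
  enough_inj : ∀ X : 𝒞, ∃ (I W : 𝒞) (i : X ⟶ I) (p : I ⟶ W), E.Inj I ∧ E.conf i p
  proj_iff_inj : ∀ P : 𝒞, E.Proj P ↔ E.Inj P

/-- A conflation `C ↣ mid ↠ A`, i.e. an extension of `A` by `C`. -/
structure Conf (E : ExactStructure 𝒞) (A C : 𝒞) where
  mid : 𝒞
  incl : C ⟶ mid
  quot : mid ⟶ A
  isConf : E.conf incl quot

/-- Equivalence of extensions: an isomorphism of the middle terms commuting with the
structure maps (and inducing the identity on the end terms). -/
def ConfRel (E : ExactStructure 𝒞) {A C : 𝒞} (e e' : Conf E A C) : Prop :=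
  ∃ φ : e.mid ≅ e'.mid, e.incl ≫ φ.hom = e'.incl ∧ φ.hom ≫ e'.quot = e.quot

/-- `Ext¹(A, C)`: the set of equivalence classes of extensions of `A` by `C`. -/
def Ext1 (E : ExactStructure 𝒞) (A C : 𝒞) : Type (max u v) :=
  Quot (ConfRel E (A := A) (C := C))

/-- The class of a conflation in `Ext¹`. -/
def Ext1.mk (E : ExactStructure 𝒞) {A C : 𝒞} (e : Conf E A C) : Ext1 E A C :=
  Quot.mk _ e

/-- The class in `Ext¹(A,C)` of the split extension `C ↣ C ⊕ A ↠ A`. -/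
noncomputable def splitExt (E : ExactStructure 𝒞) (A C : 𝒞) : Ext1 E A C :=
  Ext1.mk E ⟨C ⊞ A, biprod.inl, biprod.snd, E.split_conf C A⟩

/-- `|Ext¹(A, C)_B|`: the number of classes of extensions of `A` by `C` whose middle term is
isomorphic to `B`. -/
noncomputable def ext1CardWith (E : ExactStructure 𝒞) (A C B : 𝒞) : ℕ :=
  Nat.card {x : Ext1 E A C // ∃ e : Conf E A C, Ext1.mk E e = x ∧ Nonempty (e.mid ≅ B)}

/-- The structure constant `|Ext¹(A, C)_B| / |Hom(A, C)|` of the Hall algebra. -/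
noncomputable def hallCoeff (E : ExactStructure 𝒞) (A C B : 𝒞) : ℚ :=
  (ext1CardWith E A C B : ℚ) / (Nat.card (A ⟶ C) : ℚ)

/-- A bilinear multiplication on the Hall module with the Hall structure constants:
`[A] ⋄ [C] = ∑_B (|Ext¹(A,C)_B| / |Hom(A,C)|) [B]`. -/
structure HallMul (E : ExactStructure 𝒞) where
  mul : (IsoCl 𝒞 →₀ ℚ) →ₗ[ℚ] (IsoCl 𝒞 →₀ ℚ) →ₗ[ℚ] (IsoCl 𝒞 →₀ ℚ)
  mul_basis : ∀ A C B : 𝒞, mul (hallBasis A) (hallBasis C) (skel B) = hallCoeff E A C B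

/-- A morphism factors through a projective-injective object. -/
def FactorsThruProj (E : ExactStructure 𝒞) {X Y : 𝒞} (f : X ⟶ Y) : Prop :=
  ∃ (P : 𝒞) (u : X ⟶ P) (v : P ⟶ Y), E.Proj P ∧ u ≫ v = f

/-- Morphism space in the stable category: morphisms of `𝒞` modulo those factoring
through projective-injective objects. -/
def StHom (E : ExactStructure 𝒞) (X Y : 𝒞) : Type v :=
  Quot (fun f g : X ⟶ Y => FactorsThruProj E (f - g))

/-- The class in the stable category of a morphism. -/
def StHom.mk (E : ExactStructure 𝒞) {X Y : 𝒞} (f : X ⟶ Y) : StHom E X Y :=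
  Quot.mk _ f

/-- Two objects are isomorphic in the stable category. -/
def StIso (E : ExactStructure 𝒞) (X Y : 𝒞) : Prop :=
  ∃ (f : X ⟶ Y) (g : Y ⟶ X),
    StHom.mk E (f ≫ g) = StHom.mk E (𝟙 X) ∧ StHom.mk E (g ≫ f) = StHom.mk E (𝟙 Y)

/-- The isomorphism classes of objects of the stable category. -/
def StSkel (E : ExactStructure 𝒞) : Type u := Quot (StIso E)

/-- The stable isomorphism class of an object. -/
def stCl (E : ExactStructure 𝒞) (X : 𝒞) : StSkel E := Quot.mk _ X

/-- Suspension data for a Frobenius category: for each object `X` a conflation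
`X ↣ I X ↠ S X` with `I X` projective-injective; `S` implements the suspension functor `Σ`
of the stable category on objects. -/
structure SuspData (E : ExactStructure 𝒞) where
  S : 𝒞 → 𝒞
  I : 𝒞 → 𝒞
  ins : ∀ X : 𝒞, X ⟶ I X
  out : ∀ X : 𝒞, I X ⟶ S X
  proj : ∀ X : 𝒞, E.Proj (I X)
  isConf : ∀ X : 𝒞, E.conf (ins X) (out X)

variable {E : ExactStructure 𝒞}

/-- Iterated suspension `Σⁿ` on objects. -/
def SIter (Sd : SuspData E) : ℕ → 𝒞 → 𝒞
  | 0, X => X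
  | n + 1, X => Sd.S (SIter Sd n X)

/-- Syzygy data for a Frobenius category: for each object `X` a conflation
`Ω X ↣ P X ↠ X` with `P X` projective-injective (a choice of projective covers, giving
projective resolutions). -/
structure SyzData (E : ExactStructure 𝒞) where
  Om : 𝒞 → 𝒞
  P : 𝒞 → 𝒞
  ins : ∀ X : 𝒞, Om X ⟶ P X
  out : ∀ X : 𝒞, P X ⟶ X
  proj : ∀ X : 𝒞, E.Proj (P X)
  isConf : ∀ X : 𝒞, E.conf (ins X) (out X)

/-- Iterated syzygy `Ωⁿ` on objects. -/
def OmIter (D : SyzData E) : ℕ → 𝒞 → 𝒞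
  | 0, X => X
  | n + 1, X => D.Om (OmIter D n X)

/-- The differential `P(Ωⁿ⁺¹ M) ⟶ P(Ωⁿ M)` of the projective resolution
`⋯ → P(Ω² M) → P(Ω M) → P(M) → 0` of `M` determined by syzygy data. -/
def resDiff (D : SyzData E) (n : ℕ) (M : 𝒞) :
    D.P (OmIter D (n + 1) M) ⟶ D.P (OmIter D n M) :=
  D.out (OmIter D (n + 1) M) ≫ D.ins (OmIter D n M)

/-- Cocycles for `Ext^(q+1)(M, N)`: morphisms `P(Ω^(q+1) M) ⟶ N` killed by the differential. -/
def extCocycle (D : SyzData E) (q : ℕ) (M N : 𝒞) : Type v :=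
  {f : D.P (OmIter D (q + 1) M) ⟶ N // resDiff D (q + 1) M ≫ f = 0}

/-- `Ext^(q+1)(M, N)` in the exact category: the `(q+1)`-st cohomology of
`Hom(R(M)•, N)` for the projective resolution `R(M)•` of `M` given by the syzygy data. -/
def extGrp (D : SyzData E) (q : ℕ) (M N : 𝒞) : Type v :=
  Quot (fun f g : extCocycle D q M N =>
    ∃ h : D.P (OmIter D q M) ⟶ N, f.1 - g.1 = resDiff D q M ≫ h)

/-- The truncated relative Euler form
`⟨A,B⟩ = (|Hom_F(A,B)| / |Hom_F̄(A,B)|) ⬝ ∏_{0 < i ≤ N} |Ext^{-i}_F̄(A,B)|^((-1)^(i-1))`,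
where `Ext^{-i}_F̄(A, B) = Hom_F̄(Σⁱ A, B)`.  (Under the "left locally homologically finite"
assumption all but finitely many factors are trivial, so for `N` large enough this is the
relative Euler form.) -/
noncomputable def relEulerAt (Sd : SuspData E) (N : ℕ) (A B : 𝒞) : ℚ :=
  ((Nat.card (A ⟶ B) : ℚ) / (Nat.card (StHom E A B) : ℚ)) *
    ∏ i ∈ Finset.range N, ((Nat.card (StHom E (SIter Sd (i + 1) A) B) : ℚ) ^ ((-1 : ℤ) ^ i))

/-- The truncated structure constants of the derived Hall algebra of the stable category `F̄`:
`(|Ext¹_F̄(A,C)_β| / |Hom_F̄(A,C)|) ⬝ ∏_{0 < i ≤ N} |Ext^{-i}_F̄(A,C)|^((-1)^(i-1))`, where,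
by dévissage, `Ext¹_F̄(A,C)_β` is identified with the set of classes of conflations
`C ↣ mid ↠ A` in `F` whose middle term has stable isomorphism class `β`. -/
noncomputable def stDhCoeffAt (Sd : SuspData E) (N : ℕ) (A C : 𝒞) (β : StSkel E) : ℚ :=
  ((Nat.card {x : Ext1 E A C // ∃ e : Conf E A C, Ext1.mk E e = x ∧ stCl E e.mid = β} : ℚ) /
      (Nat.card (StHom E A C) : ℚ)) *
    ∏ i ∈ Finset.range N, ((Nat.card (StHom E (SIter Sd (i + 1) A) C) : ℚ) ^ ((-1 : ℤ) ^ i))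

end Exact

/-- A bundled associative unital `ℚ`-algebra. -/
structure BundledQAlg : Type (w + 1) where
  carrier : Type w
  [ring : Ring carrier]
  [alg : Algebra ℚ carrier]

attribute [instance] BundledQAlg.ring BundledQAlg.alg

section Localization

variable {𝒞 : Type u} [Category.{v} 𝒞] [Preadditive 𝒞] [HasZeroObject 𝒞] [HasBinaryBiproducts 𝒞]

/-- A realization of the semi-derived Hall algebra `SDH(F, P(F))`: the localization of the
Hall algebra `H(F)` at the classes `[P]` of all projective-injective objects, presented by its
universal property. -/
structure HallLocalization (E : ExactStructure 𝒞) (hm : HallMul E) (A : BundledQAlg.{w}) where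
  φ : (IsoCl 𝒞 →₀ ℚ) →ₗ[ℚ] A.carrier
  mul_hom : ∀ x y, φ (hm.mul x y) = φ x * φ y
  one_hom : φ (hallBasis (0 : 𝒞)) = 1
  inverts : ∀ P : 𝒞, E.Proj P → IsUnit (φ (hallBasis P))
  universal : ∀ (B : BundledQAlg.{w}) (ψ : (IsoCl 𝒞 →₀ ℚ) →ₗ[ℚ] B.carrier),
    (∀ x y, ψ (hm.mul x y) = ψ x * ψ y) → ψ (hallBasis (0 : 𝒞)) = 1 →
    (∀ P : 𝒞, E.Proj P → IsUnit (ψ (hallBasis P))) →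
    ∃! χ : A.carrier →+* B.carrier, ∀ x, χ (φ x) = ψ x

/-- The quantum torus of projective-injectives inside the semi-derived Hall algebra:
the subalgebra generated by the classes `[P]` of projective-injective objects and their
inverses. -/
def quantumTorus {E : ExactStructure 𝒞} {hm : HallMul E} {A : BundledQAlg.{w}}
    (L : HallLocalization E hm A) : Subalgebra ℚ A.carrier :=
  Algebra.adjoin ℚ {x : A.carrier | ∃ P : 𝒞, E.Proj P ∧
    (x = L.φ (hallBasis P) ∨ (x * L.φ (hallBasis P) = 1 ∧ L.φ (hallBasis P) * x = 1))}

end Localization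

section K0

variable {𝒞 : Type u} [Category.{v} 𝒞] [Preadditive 𝒞] [HasZeroObject 𝒞] [HasBinaryBiproducts 𝒞]

/-- The relations defining the split Grothendieck group of an additive category:
isomorphic objects are identified and `[A ⊕ B] = [A] + [B]`. -/
def splitRelations (𝒞 : Type u) [Category.{v} 𝒞] [Preadditive 𝒞] [HasZeroObject 𝒞]
    [HasBinaryBiproducts 𝒞] : Set (FreeAbelianGroup 𝒞) :=
  {x | ∃ A B : 𝒞, Nonempty (A ≅ B) ∧
        x = FreeAbelianGroup.of A - FreeAbelianGroup.of B} ∪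
  {x | ∃ A B : 𝒞, x = FreeAbelianGroup.of (A ⊞ B)
        - FreeAbelianGroup.of A - FreeAbelianGroup.of B}

/-- The split Grothendieck group `K₀^split` of an additive category. -/
def K0split (𝒞 : Type u) [Category.{v} 𝒞] [Preadditive 𝒞] [HasZeroObject 𝒞]
    [HasBinaryBiproducts 𝒞] : Type u :=
  FreeAbelianGroup 𝒞 ⧸ AddSubgroup.closure (splitRelations 𝒞)

noncomputable instance : AddCommGroup (K0split 𝒞) :=
  QuotientAddGroup.Quotient.addCommGroup _

/-- The class of an object in the split Grothendieck group. -/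
def K0split.gen (A : 𝒞) : K0split 𝒞 :=
  QuotientAddGroup.mk (FreeAbelianGroup.of A)

/-- The relations defining the Grothendieck group of the (split exact) full subcategory of
projective-injective objects. -/
def projRelations (E : ExactStructure 𝒞) : Set (FreeAbelianGroup {X : 𝒞 // E.Proj X}) :=
  {x | ∃ A B : {X : 𝒞 // E.Proj X}, Nonempty (A.1 ≅ B.1) ∧
        x = FreeAbelianGroup.of A - FreeAbelianGroup.of B} ∪
  {x | ∃ A B C : {X : 𝒞 // E.Proj X}, Nonempty (C.1 ≅ A.1 ⊞ B.1) ∧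
        x = FreeAbelianGroup.of C - FreeAbelianGroup.of A - FreeAbelianGroup.of B}

/-- The Grothendieck group `K₀(P(F))` of the full subcategory of projective-injective
objects (its exact structure splits, so this is the split Grothendieck group). -/
def K0P (E : ExactStructure 𝒞) : Type u :=
  FreeAbelianGroup {X : 𝒞 // E.Proj X} ⧸ AddSubgroup.closure (projRelations E)

noncomputable instance (E : ExactStructure 𝒞) : AddCommGroup (K0P E) :=
  QuotientAddGroup.Quotient.addCommGroup _

/-- The class of a projective-injective object in `K₀(P(F))`. -/
def K0P.gen (E : ExactStructure 𝒞) (X : 𝒞) (hX : E.Proj X) : K0P E :=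
  QuotientAddGroup.mk (FreeAbelianGroup.of ⟨X, hX⟩)

end K0

section StMap

variable {𝒞' : Type u'} [Category.{v'} 𝒞'] [Preadditive 𝒞'] [HasZeroObject 𝒞']
  [HasBinaryBiproducts 𝒞']
variable {𝒞 : Type u} [Category.{v} 𝒞] [Preadditive 𝒞] [HasZeroObject 𝒞] [HasBinaryBiproducts 𝒞]

/-- The map induced on stable morphism spaces by an additive functor sending
projective-injectives to projective-injectives. -/
def stMap (E' : ExactStructure 𝒞') (E : ExactStructure 𝒞) (F : 𝒞' ⥤ 𝒞) [F.Additive]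
    (hproj : ∀ P : 𝒞', E'.Proj P → E.Proj (F.obj P)) (X Y : 𝒞') :
    StHom E' X Y → StHom E (F.obj X) (F.obj Y) :=
  Quot.map (fun f => F.map f) (by
    rintro f g ⟨P, u, v, hP, huv⟩
    exact ⟨F.obj P, F.map u, F.map v, hproj P hP, by rw [← F.map_comp, huv, F.map_sub]⟩)

end StMap


/-! ### Auxiliary lemmas for the proof -/

section AuxExact

variable {𝒞 : Type u} [Category.{v} 𝒞] [Preadditive 𝒞] [HasZeroObject 𝒞] [HasBinaryBiproducts 𝒞]
variable {E : ExactStructure 𝒞}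

lemma conf_mono {X Y Z : 𝒞} {i : X ⟶ Y} {p : Y ⟶ Z} (h : E.conf i p) : Mono i := by
  obtain ⟨hl⟩ := E.is_kernel h
  refine Preadditive.mono_of_cancel_zero i fun {P} g hg => ?_
  exact Fork.IsLimit.hom_ext hl (by simpa using hg)

lemma conf_epi {X Y Z : 𝒞} {i : X ⟶ Y} {p : Y ⟶ Z} (h : E.conf i p) : Epi p := by
  obtain ⟨hc⟩ := E.is_cokernel h
  refine Preadditive.epi_of_cancel_zero p fun {P} g hg => ?_
  exact Cofork.IsColimit.hom_ext hc (by simpa using hg)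

lemma conf_lift {X Y Z T : 𝒞} {i : X ⟶ Y} {p : Y ⟶ Z} (h : E.conf i p)
    (f : T ⟶ Y) (hf : f ≫ p = 0) : ∃ s : T ⟶ X, s ≫ i = f := by
  obtain ⟨hl⟩ := E.is_kernel h
  obtain ⟨l, hl'⟩ := KernelFork.IsLimit.lift' hl f hf
  exact ⟨l, by simpa using hl'⟩

lemma conf_desc {X Y Z T : 𝒞} {i : X ⟶ Y} {p : Y ⟶ Z} (h : E.conf i p)
    (f : Y ⟶ T) (hf : i ≫ f = 0) : ∃ s : Z ⟶ T, p ≫ s = f := by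
  obtain ⟨hc⟩ := E.is_cokernel h
  obtain ⟨l, hl'⟩ := CokernelCofork.IsColimit.desc' hc f hf
  exact ⟨l, by simpa using hl'⟩

lemma conf_of_isKernel {W X M N : 𝒞} {κ : W ⟶ M} {d : M ⟶ N} (h : E.conf κ d)
    {ξ : X ⟶ M} (hξ : ξ ≫ d = 0) (hlim : IsLimit (KernelFork.ofι ξ hξ)) :
    E.conf ξ d := by
  have hmκ : Mono κ := conf_mono h
  have hmξ : Mono ξ := by
    refine Preadditive.mono_of_cancel_zero ξ fun {P} g hg => ?_
    exact Fork.IsLimit.hom_ext hlim (by simpa using hg)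
  obtain ⟨w, hw⟩ := KernelFork.IsLimit.lift' hlim κ (E.comp_zero h)
  simp only [Fork.ι_ofι] at hw
  obtain ⟨m, hm⟩ := conf_lift h ξ hξ
  have hwm : w ≫ m = 𝟙 W := by
    have h2 : (w ≫ m) ≫ κ = 𝟙 W ≫ κ := by
      rw [Category.assoc, hm, hw, Category.id_comp]
    exact (cancel_mono κ).mp h2
  have hmw : m ≫ w = 𝟙 X := by
    have h2 : (m ≫ w) ≫ ξ = 𝟙 X ≫ ξ := by
      rw [Category.assoc, hw, hm, Category.id_comp]
    exact (cancel_mono ξ).mp h2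
  exact E.conf_iso ⟨w, m, hwm, hmw⟩ (Iso.refl M) (Iso.refl N) h
    (by simpa using hw.symm) (by simp)

lemma conf_coker_unique {X M Y Y' : 𝒞} {ξ : X ⟶ M} {c : M ⟶ Y} {d : M ⟶ Y'}
    (hc : E.conf ξ c) (hd : E.conf ξ d) :
    ∃ ε : Y ⟶ Y', IsIso ε ∧ c ≫ ε = d := by
  obtain ⟨ε, hε⟩ := conf_desc hc d (E.comp_zero hd)
  obtain ⟨ε', hε'⟩ := conf_desc hd c (E.comp_zero hc)
  have hce : Epi c := conf_epi hc
  have hde : Epi d := conf_epi hd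
  have h1 : ε ≫ ε' = 𝟙 Y := by
    have h2 : c ≫ ε ≫ ε' = c ≫ 𝟙 Y := by
      rw [← Category.assoc, hε, hε', Category.comp_id]
    exact (cancel_epi c).mp h2
  have h2 : ε' ≫ ε = 𝟙 Y' := by
    have h3 : d ≫ ε' ≫ ε = d ≫ 𝟙 Y' := by
      rw [← Category.assoc, hε', hε, Category.comp_id]
    exact (cancel_epi d).mp h3
  exact ⟨ε, ⟨⟨ε', h1, h2⟩⟩, hε⟩

/-- Kernel identification for the pullback of a deflation: the pullback of a conflation
`X ↣ I ↠ S` along `h : Z ⟶ S` is again a conflation with kernel `X`. -/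
lemma conf_pullback_kernel {X I S Z P : 𝒞} {j : X ⟶ I} {q : I ⟶ S} (hjq : E.conf j q)
    {h : Z ⟶ S} {g'' : P ⟶ I} {p'' : P ⟶ Z} (hpb : IsPullback g'' p'' q h)
    {W : 𝒞} {k : W ⟶ P} (hk : E.conf k p'') :
    ∃ l : X ⟶ P, l ≫ g'' = j ∧ l ≫ p'' = 0 ∧ E.conf l p'' := by
  have hmj : Mono j := conf_mono hjq
  have hl0 : j ≫ q = (0 : X ⟶ Z) ≫ h := by rw [E.comp_zero hjq, Limits.zero_comp]
  have hlg : hpb.lift j 0 hl0 ≫ g'' = j := hpb.lift_fst _ _ _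
  have hlp : hpb.lift j 0 hl0 ≫ p'' = 0 := hpb.lift_snd _ _ _
  have hker : IsLimit (KernelFork.ofι (hpb.lift j 0 hl0) hlp) := by
    refine KernelFork.IsLimit.ofι _ hlp
      (fun {T} τ hτ => (conf_lift hjq (τ ≫ g'')
        (by rw [Category.assoc, hpb.w, ← Category.assoc, hτ, Limits.zero_comp])).choose)
      ?_ ?_
    · intro T τ hτ
      have hσ := (conf_lift hjq (τ ≫ g'')
        (by rw [Category.assoc, hpb.w, ← Category.assoc, hτ, Limits.zero_comp])).choose_spec
      refine hpb.hom_ext ?_ ?_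
      · rw [Category.assoc, hlg]; exact hσ
      · rw [Category.assoc, hlp, Limits.comp_zero, hτ]
    · intro T τ hτ m hm
      have hσ := (conf_lift hjq (τ ≫ g'')
        (by rw [Category.assoc, hpb.w, ← Category.assoc, hτ, Limits.zero_comp])).choose_spec
      refine (cancel_mono j).mp ?_
      rw [hσ, ← hlg, ← Category.assoc, hm]
  exact ⟨hpb.lift j 0 hl0, hlg, hlp, conf_of_isKernel hk hlp hker⟩

/-- The short five lemma in an exact category:  a morphism of conflations which is the
identity on the end terms is an isomorphism. -/
lemma five_lemma {X Y Y' Z : 𝒞} {i : X ⟶ Y} {p : Y ⟶ Z} {i' : X ⟶ Y'} {p' : Y' ⟶ Z}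
    (h : E.conf i p) (h' : E.conf i' p') (u : Y ⟶ Y')
    (hiu : i ≫ u = i') (hup : u ≫ p' = p) : IsIso u := by
  have hmi' : Mono i' := conf_mono h'
  have hmu : Mono u := by
    refine Preadditive.mono_of_cancel_zero u fun {P} ρ hρ => ?_
    have hρp : ρ ≫ p = 0 := by rw [← hup, ← Category.assoc, hρ, Limits.zero_comp]
    obtain ⟨σ, hσ⟩ := conf_lift h ρ hρp
    have hσ0 : σ = 0 := by
      have h2 : σ ≫ i' = 0 := by rw [← hiu, ← Category.assoc, hσ, hρ]
      exact zero_of_comp_mono i' h2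
    rw [← hσ, hσ0, Limits.zero_comp]
  -- the middle map of conflations, as a map out of a biproduct, and its kernel
  have hξd : biprod.lift (𝟙 X) (-i) ≫ biprod.desc i' u = 0 := by
    rw [biprod.lift_desc, Category.id_comp, Preadditive.neg_comp, hiu, add_neg_cancel]
  have hd_eq : (biprod.desc i' u : X ⊞ Y ⟶ Y') = biprod.fst ≫ i' + biprod.snd ≫ u := by
    apply biprod.hom_ext' <;> simp
  have hker : IsLimit (KernelFork.ofι (biprod.lift (𝟙 X) (-i)) hξd) := by
    refine KernelFork.IsLimit.ofι _ hξd (fun {T} τ hτ => τ ≫ biprod.fst) ?_ ?_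
    · intro T τ hτ
      rw [hd_eq] at hτ
      have h0 : ((τ ≫ biprod.fst) ≫ i + τ ≫ biprod.snd) ≫ u = 0 := by
        rw [Preadditive.add_comp, Category.assoc, Category.assoc, hiu]
        simpa [Preadditive.comp_add] using hτ
      have hsum : (τ ≫ biprod.fst) ≫ i + τ ≫ biprod.snd = 0 := by
        exact zero_of_comp_mono u h0
      have hτ2 : τ ≫ biprod.snd = -((τ ≫ biprod.fst) ≫ i) :=
        eq_neg_of_add_eq_zero_right (by rw [add_comm] at hsum ⊢; exact hsum)
      apply biprod.hom_ext
      · simp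
      · simp [hτ2]
    · intro T τ hτ m hm
      have hfst : biprod.lift (𝟙 X) (-i) ≫ biprod.fst = 𝟙 X := by simp
      show m = τ ≫ biprod.fst
      rw [← hm, Category.assoc, hfst, Category.comp_id]
  -- first pullback: of p' along p
  obtain ⟨D, π, g, hpb1, W, kk, hkk⟩ := E.pullback_defl h' p
  obtain ⟨x, hxg, hxπ, hconfx⟩ := conf_pullback_kernel h' hpb1 hkk
  have hmx : Mono x := conf_mono hconfx
  have haw : u ≫ p' = 𝟙 Y ≫ p := by rw [hup, Category.id_comp]
  have hag : hpb1.lift u (𝟙 Y) haw ≫ g = u := hpb1.lift_fst _ _ _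
  have haπ : hpb1.lift u (𝟙 Y) haw ≫ π = 𝟙 Y := hpb1.lift_snd _ _ _
  set a : Y ⟶ D := hpb1.lift u (𝟙 Y) haw with ha_def
  -- a retraction r of x
  obtain ⟨r, hr⟩ := conf_lift hconfx (𝟙 D - π ≫ a)
    (by rw [Preadditive.sub_comp, Category.id_comp, Category.assoc, haπ, Category.comp_id,
        sub_self])
  have hxr : x ≫ r = 𝟙 X := by
    refine (cancel_mono x).mp ?_
    rw [Category.assoc, hr, Preadditive.comp_sub, Category.comp_id, ← Category.assoc, hxπ,
      Limits.zero_comp, sub_zero, Category.id_comp]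
  have har : a ≫ r = 0 := by
    refine (cancel_mono x).mp ?_
    rw [Category.assoc, hr, Preadditive.comp_sub, Category.comp_id, ← Category.assoc, haπ,
      Category.id_comp, sub_self, Limits.zero_comp]
  -- D ≅ X ⊞ Y
  have hΦ1 : biprod.lift r π ≫ biprod.desc x a = 𝟙 D := by
    rw [biprod.lift_desc, hr, sub_add_cancel]
  have hΦ2 : biprod.desc x a ≫ biprod.lift r π = 𝟙 (X ⊞ Y) := by
    apply biprod.hom_ext' <;> apply biprod.hom_ext <;>
      simp [hxr, hxπ, haπ, har]
  have hinvg : biprod.desc x a ≫ g = biprod.desc i' u := by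
    apply biprod.hom_ext' <;> simp [hxg, hag]
  -- second pullback: of p along p'
  obtain ⟨D₂, π₂, g₂, hpb2, W₂, k₂, hk₂⟩ := E.pullback_defl h p'
  have hθg : hpb1.lift π₂ g₂ hpb2.w.symm ≫ g = π₂ := hpb1.lift_fst _ _ _
  have hθπ : hpb1.lift π₂ g₂ hpb2.w.symm ≫ π = g₂ := hpb1.lift_snd _ _ _
  set θ : D₂ ⟶ D := hpb1.lift π₂ g₂ hpb2.w.symm with hθ_def
  have hθ'g₂ : hpb2.lift π g hpb1.w.symm ≫ g₂ = π := hpb2.lift_fst _ _ _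
  have hθ'π₂ : hpb2.lift π g hpb1.w.symm ≫ π₂ = g := hpb2.lift_snd _ _ _
  set θ' : D ⟶ D₂ := hpb2.lift π g hpb1.w.symm with hθ'_def
  have hθθ' : θ ≫ θ' = 𝟙 D₂ := by
    refine hpb2.hom_ext ?_ ?_
    · rw [Category.assoc, hθ'g₂, hθπ, Category.id_comp]
    · rw [Category.assoc, hθ'π₂, hθg, Category.id_comp]
  have hθ'θ : θ' ≫ θ = 𝟙 D := by
    refine hpb1.hom_ext ?_ ?_
    · rw [Category.assoc, hθg, hθ'π₂, Category.id_comp]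
    · rw [Category.assoc, hθπ, hθ'g₂, Category.id_comp]
  -- transport the conflation structure onto (biprod.desc i' u)
  have hconf_g : E.conf (k₂ ≫ θ) g :=
    E.conf_iso (Iso.refl W₂) ⟨θ, θ', hθθ', hθ'θ⟩ (Iso.refl Y') hk₂
      (by simp) (by simpa using hθg.symm)
  have hconf_d : E.conf ((k₂ ≫ θ) ≫ biprod.lift r π) (biprod.desc i' u) := by
    refine E.conf_iso (Iso.refl W₂) ⟨biprod.lift r π, biprod.desc x a, hΦ1, hΦ2⟩
      (Iso.refl Y') hconf_g (by simp) ?_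
    show g ≫ 𝟙 Y' = biprod.lift r π ≫ biprod.desc i' u
    rw [Category.comp_id, ← hinvg, ← Category.assoc, hΦ1, Category.id_comp]
  have hconf_ξ : E.conf (biprod.lift (𝟙 X) (-i)) (biprod.desc i' u) :=
    conf_of_isKernel hconf_d hξd hker
  -- the split conflation with the same kernel
  have he1 : (biprod.lift biprod.fst (biprod.snd - biprod.fst ≫ i) : X ⊞ Y ⟶ X ⊞ Y) ≫
      biprod.lift biprod.fst (biprod.snd + biprod.fst ≫ i) = 𝟙 (X ⊞ Y) := by
    apply biprod.hom_ext <;> simp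
  have he2 : (biprod.lift biprod.fst (biprod.snd + biprod.fst ≫ i) : X ⊞ Y ⟶ X ⊞ Y) ≫
      biprod.lift biprod.fst (biprod.snd - biprod.fst ≫ i) = 𝟙 (X ⊞ Y) := by
    apply biprod.hom_ext <;> simp
  have hinle : biprod.inl ≫ biprod.lift biprod.fst (biprod.snd - biprod.fst ≫ i) =
      biprod.lift (𝟙 X) (-i) := by
    apply biprod.hom_ext <;> simp
  have hconf_c : E.conf (biprod.lift (𝟙 X) (-i))
      (biprod.lift biprod.fst (biprod.snd + biprod.fst ≫ i) ≫ biprod.snd) := by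
    refine E.conf_iso (Iso.refl X)
      ⟨biprod.lift biprod.fst (biprod.snd - biprod.fst ≫ i),
       biprod.lift biprod.fst (biprod.snd + biprod.fst ≫ i), he1, he2⟩
      (Iso.refl Y) (E.split_conf X Y) (by simpa using hinle) ?_
    show biprod.snd ≫ 𝟙 Y = biprod.lift biprod.fst (biprod.snd - biprod.fst ≫ i) ≫
      biprod.lift biprod.fst (biprod.snd + biprod.fst ≫ i) ≫ biprod.snd
    rw [Category.comp_id, ← Category.assoc, he1, Category.id_comp]
  obtain ⟨ε, hεiso, hcε⟩ := conf_coker_unique hconf_c hconf_ξ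
  have hinrc : biprod.inr ≫ biprod.lift biprod.fst (biprod.snd + biprod.fst ≫ i) ≫
      biprod.snd = 𝟙 Y := by simp
  have huε : u = ε := by
    have h1 : biprod.inr ≫ biprod.desc i' u = u := biprod.inr_desc _ _
    rw [← h1, ← hcε, ← Category.assoc, hinrc, Category.id_comp]
  rw [huε]; exact hεiso

end AuxExact


section AuxFunctor

variable {𝒞' : Type u'} [Category.{v'} 𝒞'] [Preadditive 𝒞'] [HasZeroObject 𝒞']
  [HasBinaryBiproducts 𝒞']
variable {𝒞 : Type u} [Category.{v} 𝒞] [Preadditive 𝒞] [HasZeroObject 𝒞] [HasBinaryBiproducts 𝒞]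
variable {E' : ExactStructure 𝒞'} {E : ExactStructure 𝒞}
variable (F : 𝒞' ⥤ 𝒞)

/-- The image of a conflation under an exact functor. -/
def mapConf (hexact : ∀ {X Y Z : 𝒞'} (i : X ⟶ Y) (p : Y ⟶ Z),
      E'.conf i p → E.conf (F.map i) (F.map p))
    {A C : 𝒞'} (e : Conf E' A C) : Conf E (F.obj A) (F.obj C) :=
  ⟨F.obj e.mid, F.map e.incl, F.map e.quot, hexact _ _ e.isConf⟩

lemma confRel_equivalence (E₀ : ExactStructure 𝒞) (A C : 𝒞) :
    Equivalence (ConfRel E₀ (A := A) (C := C)) := by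
  constructor
  · exact fun e => ⟨Iso.refl _, by simp, by simp⟩
  · rintro e e' ⟨φ, h1, h2⟩
    refine ⟨φ.symm, ?_, ?_⟩
    · rw [Iso.symm_hom, ← h1, Category.assoc, φ.hom_inv_id, Category.comp_id]
    · rw [Iso.symm_hom, ← h2, ← Category.assoc, φ.inv_hom_id, Category.id_comp]
  · rintro e₁ e₂ e₃ ⟨φ, h1, h2⟩ ⟨ψ, g1, g2⟩
    refine ⟨φ ≪≫ ψ, ?_, ?_⟩
    · rw [Iso.trans_hom, ← Category.assoc, h1, g1]
    · rw [Iso.trans_hom, Category.assoc, g2, h2]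

lemma confRel_map (hexact : ∀ {X Y Z : 𝒞'} (i : X ⟶ Y) (p : Y ⟶ Z),
      E'.conf i p → E.conf (F.map i) (F.map p))
    {A C : 𝒞'} {e₁ e₂ : Conf E' A C} (h : ConfRel E' e₁ e₂) :
    ConfRel E (mapConf F hexact e₁) (mapConf F hexact e₂) := by
  obtain ⟨φ, h1, h2⟩ := h
  exact ⟨F.mapIso φ, by simp [mapConf, ← F.map_comp, h1], by simp [mapConf, ← F.map_comp, h2]⟩

lemma confRel_reflect [F.Full] [F.Faithful]
    (hexact : ∀ {X Y Z : 𝒞'} (i : X ⟶ Y) (p : Y ⟶ Z),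
      E'.conf i p → E.conf (F.map i) (F.map p))
    {A C : 𝒞'} {e₁ e₂ : Conf E' A C}
    (h : ConfRel E (mapConf F hexact e₁) (mapConf F hexact e₂)) : ConfRel E' e₁ e₂ := by
  obtain ⟨φ, h1, h2⟩ := h
  refine ⟨F.preimageIso φ, F.map_injective ?_, F.map_injective ?_⟩
  · rw [F.map_comp, show F.map (F.preimageIso φ).hom = φ.hom from F.map_preimage _]
    exact h1
  · rw [F.map_comp, show F.map (F.preimageIso φ).hom = φ.hom from F.map_preimage _]
    exact h2

/-- Any conflation of `F A` by `F C` is equivalent to the image of a conflation in `𝒞'`. -/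
lemma conf_essSurj (hFrob' : IsFrobenius E') (hFrob : IsFrobenius E)
    [F.Additive] [F.Full] [F.Faithful]
    (hexact : ∀ {X Y Z : 𝒞'} (i : X ⟶ Y) (p : Y ⟶ Z),
      E'.conf i p → E.conf (F.map i) (F.map p))
    (hproj : ∀ P : 𝒞', E'.Proj P → E.Proj (F.obj P))
    {A C : 𝒞'} (e : Conf E (F.obj A) (F.obj C)) :
    ∃ e' : Conf E' A C, ConfRel E (mapConf F hexact e') e := by
  -- embed C into an injective of 𝒞'
  obtain ⟨I, S, j, q, hInj, hjq⟩ := hFrob'.enough_inj C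
  have hIproj : E'.Proj I := (hFrob'.proj_iff_inj I).mpr hInj
  have hFIinj : E.Inj (F.obj I) := (hFrob.proj_iff_inj (F.obj I)).mp (hproj I hIproj)
  -- extend F j over the middle term of e
  obtain ⟨t, ht⟩ := hFIinj e.incl e.quot e.isConf (F.map j)
  have h1 : e.incl ≫ (t ≫ F.map q) = 0 := by
    rw [← Category.assoc, ht, ← F.map_comp, E'.comp_zero hjq]
    exact F.map_zero _ _
  obtain ⟨h0, hh0⟩ := conf_desc e.isConf (t ≫ F.map q) h1
  -- pull back in 𝒞'
  obtain ⟨Y'', p', g, hpb', W', k', hk'⟩ := E'.pullback_defl hjq (F.preimage h0)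
  obtain ⟨l, hlg, hlp, hconf_l⟩ := conf_pullback_kernel hjq hpb' hk'
  -- pull back in 𝒞
  obtain ⟨Z0, p'', g'', hpb, W0, kk, hkk⟩ :=
    E.pullback_defl (hexact j q hjq) (F.map (F.preimage h0))
  obtain ⟨lZ, hlZg, hlZp, hconf_lZ⟩ := conf_pullback_kernel (hexact j q hjq) hpb hkk
  -- comparison from the middle term of e
  have hth : t ≫ F.map q = e.quot ≫ F.map (F.preimage h0) := by
    rw [F.map_preimage]; exact hh0.symm
  have hug : hpb.lift t e.quot hth ≫ g'' = t := hpb.lift_fst _ _ _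
  have hupp : hpb.lift t e.quot hth ≫ p'' = e.quot := hpb.lift_snd _ _ _
  set u : e.mid ⟶ Z0 := hpb.lift t e.quot hth with hu_def
  have hiu : e.incl ≫ u = lZ := by
    refine hpb.hom_ext ?_ ?_
    · rw [Category.assoc, hug, ht, hlZg]
    · rw [Category.assoc, hupp, E.comp_zero e.isConf, hlZp]
  haveI hIu : IsIso u := five_lemma e.isConf hconf_lZ u hiu hupp
  -- comparison from the image of the 𝒞'-pullback
  have hgq : F.map g ≫ F.map q = F.map p' ≫ F.map (F.preimage h0) := by
    rw [← F.map_comp, ← F.map_comp, hpb'.w]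
  have hvg : hpb.lift (F.map g) (F.map p') hgq ≫ g'' = F.map g := hpb.lift_fst _ _ _
  have hvp : hpb.lift (F.map g) (F.map p') hgq ≫ p'' = F.map p' := hpb.lift_snd _ _ _
  set v : F.obj Y'' ⟶ Z0 := hpb.lift (F.map g) (F.map p') hgq with hv_def
  have hlv : F.map l ≫ v = lZ := by
    refine hpb.hom_ext ?_ ?_
    · rw [Category.assoc, hvg, ← F.map_comp, hlg, hlZg]
    · rw [Category.assoc, hvp, ← F.map_comp, hlp, hlZp]
      exact F.map_zero _ _
  haveI hIv : IsIso v := five_lemma (hexact l p' hconf_l) hconf_lZ v hlv hvp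
  refine ⟨⟨Y'', l, p', hconf_l⟩, @asIso _ _ _ _ v hIv ≪≫ (asIso u).symm, ?_, ?_⟩
  · show F.map l ≫ (asIso v ≪≫ (asIso u).symm).hom = e.incl
    simp only [Iso.trans_hom, asIso_hom, Iso.symm_hom, asIso_inv]
    rw [← Category.assoc, hlv, ← hiu, Category.assoc, IsIso.hom_inv_id, Category.comp_id]
  · show (asIso v ≪≫ (asIso u).symm).hom ≫ e.quot = F.map p'
    simp only [Iso.trans_hom, asIso_hom, Iso.symm_hom, asIso_inv]
    have h2 : inv u ≫ e.quot = p'' := by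
      rw [← hupp, ← Category.assoc, IsIso.inv_hom_id, Category.id_comp]
    rw [Category.assoc, h2, hvp]

end AuxFunctor


section AuxCount

variable {𝒞' : Type u'} [Category.{v'} 𝒞'] [Preadditive 𝒞'] [HasZeroObject 𝒞']
  [HasBinaryBiproducts 𝒞']
variable {𝒞 : Type u} [Category.{v} 𝒞] [Preadditive 𝒞] [HasZeroObject 𝒞] [HasBinaryBiproducts 𝒞]
variable {E' : ExactStructure 𝒞'} {E : ExactStructure 𝒞}
variable (F : 𝒞' ⥤ 𝒞)

lemma skelMap_skel (A : 𝒞') : skelMap F (skel A) = skel (F.obj A) := by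
  unfold skelMap skel
  exact Quotient.map_mk _ _ _

lemma skelMap_injective [F.Full] [F.Faithful] : Function.Injective (skelMap F) := by
  intro a b hab
  obtain ⟨A0, ha⟩ := @Quotient.exists_rep _ (isIsomorphicSetoid 𝒞') a
  obtain ⟨B0, hb⟩ := @Quotient.exists_rep _ (isIsomorphicSetoid 𝒞') b
  rw [← ha, ← hb] at hab ⊢
  have hab' : skel (F.obj A0) = skel (F.obj B0) := by
    rw [← skelMap_skel F A0, ← skelMap_skel F B0]; exact hab
  have hiso : Nonempty (F.obj A0 ≅ F.obj B0) := Quotient.exact hab'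
  obtain ⟨φ⟩ := hiso
  exact Quotient.sound ⟨F.preimageIso φ⟩

lemma hallMap_basis (A : 𝒞') : hallMap F (hallBasis A) = hallBasis (F.obj A) := by
  unfold hallMap hallBasis
  rw [Finsupp.lmapDomain_apply, Finsupp.mapDomain_single, skelMap_skel]

lemma ext1CardWith_congr (E₀ : ExactStructure 𝒞) (A C : 𝒞) {B B' : 𝒞} (h : B ≅ B') :
    ext1CardWith E₀ A C B = ext1CardWith E₀ A C B' := by
  refine Nat.card_congr (Equiv.subtypeEquivRight fun x => ?_)
  constructor
  · rintro ⟨e, h1, ⟨i⟩⟩; exact ⟨e, h1, ⟨i ≪≫ h⟩⟩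
  · rintro ⟨e, h1, ⟨i⟩⟩; exact ⟨e, h1, ⟨i ≪≫ h.symm⟩⟩

lemma ext1CardWith_map (hFrob' : IsFrobenius E') (hFrob : IsFrobenius E)
    [F.Additive] [F.Full] [F.Faithful]
    (hexact : ∀ {X Y Z : 𝒞'} (i : X ⟶ Y) (p : Y ⟶ Z),
      E'.conf i p → E.conf (F.map i) (F.map p))
    (hproj : ∀ P : 𝒞', E'.Proj P → E.Proj (F.obj P))
    (A C B : 𝒞') :
    ext1CardWith E' A C B = ext1CardWith E (F.obj A) (F.obj C) (F.obj B) := by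
  apply Nat.card_congr
  have hΦrel : ∀ (e₁ e₂ : Conf E' A C), ConfRel E' e₁ e₂ →
      ConfRel E (mapConf F hexact e₁) (mapConf F hexact e₂) :=
    fun _ _ h => confRel_map F hexact h
  set Φ : Ext1 E' A C → Ext1 E (F.obj A) (F.obj C) :=
    Quot.map (mapConf F hexact) hΦrel with hΦ_def
  have hΦmk : ∀ e : Conf E' A C, Φ (Ext1.mk E' e) = Ext1.mk E (mapConf F hexact e) :=
    fun _ => rfl
  have hΦinj : Function.Injective Φ := by
    intro x y
    induction x using Quot.ind with | _ e₁ => ?_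
    induction y using Quot.ind with | _ e₂ => ?_
    intro hxy
    have hxy' : Quot.mk (ConfRel E) (mapConf F hexact e₁) =
        Quot.mk (ConfRel E) (mapConf F hexact e₂) := hxy
    have hrel := ((confRel_equivalence E (F.obj A) (F.obj C)).eqvGen_iff).mp
      (Quot.eqvGen_exact hxy')
    exact Quot.sound (confRel_reflect F hexact hrel)
  refine Equiv.ofBijective (fun s => ⟨Φ s.1, ?_⟩) ⟨?_, ?_⟩
  · obtain ⟨e, hmk, ⟨iso⟩⟩ := s.2
    exact ⟨mapConf F hexact e, by rw [← hmk]; rfl, ⟨F.mapIso iso⟩⟩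
  · intro s t hst
    exact Subtype.ext (hΦinj (congrArg Subtype.val hst))
  · rintro ⟨y, e₀, hmk, ⟨iso₀⟩⟩
    obtain ⟨e'', hrel⟩ := conf_essSurj F hFrob' hFrob hexact hproj e₀
    obtain ⟨φ0, -, -⟩ := id hrel
    refine ⟨⟨Ext1.mk E' e'', e'', rfl, ⟨F.preimageIso (φ0 ≪≫ iso₀)⟩⟩, ?_⟩
    apply Subtype.ext
    show Φ (Ext1.mk E' e'') = y
    rw [hΦmk, ← hmk]
    exact Quot.sound hrel
  
lemma ext1CardWith_zero (hFrob' : IsFrobenius E') (hFrob : IsFrobenius E)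
    [F.Additive] [F.Full] [F.Faithful]
    (hexact : ∀ {X Y Z : 𝒞'} (i : X ⟶ Y) (p : Y ⟶ Z),
      E'.conf i p → E.conf (F.map i) (F.map p))
    (hproj : ∀ P : 𝒞', E'.Proj P → E.Proj (F.obj P))
    (A C : 𝒞') (D : 𝒞) (hD : ∀ M : 𝒞', ¬ Nonempty (D ≅ F.obj M)) :
    ext1CardWith E (F.obj A) (F.obj C) D = 0 := by
  have hempty : IsEmpty {x : Ext1 E (F.obj A) (F.obj C) //
      ∃ e : Conf E (F.obj A) (F.obj C), Ext1.mk E e = x ∧ Nonempty (e.mid ≅ D)} := by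
    constructor
    rintro ⟨y, e₀, -, ⟨iso₀⟩⟩
    obtain ⟨e'', φ0, -, -⟩ := conf_essSurj F hFrob' hFrob hexact hproj e₀
    exact hD e''.mid ⟨iso₀.symm ≪≫ φ0.symm⟩
  exact @Nat.card_of_isEmpty _ hempty

lemma homCard_map [F.Full] [F.Faithful] (A C : 𝒞') :
    Nat.card (A ⟶ C) = Nat.card (F.obj A ⟶ F.obj C) :=
  Nat.card_congr (Equiv.ofBijective (fun f => F.map f)
    ⟨fun _ _ h => F.map_injective h, fun g => ⟨F.preimage g, F.map_preimage g⟩⟩)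

end AuxCount


/-- Corollary 3.4.  If `F : F' → F` is a fully faithful map between
essentially small `Hom`-finite Frobenius categories linear over a finite field, then the
induced linear map `F₊ : H(F') → H(F)`, `[M] ↦ [F(M)]`, is an injective homomorphism of Hall
algebras. -/
theorem hall_algebra_functoriality
    {k : Type} [Field k] [Finite k]
    {𝒞' : Type u'} [Category.{v'} 𝒞'] [Preadditive 𝒞'] [CategoryTheory.Linear k 𝒞']
    [HasZeroObject 𝒞'] [HasBinaryBiproducts 𝒞'] [EssentiallySmall.{v'} 𝒞']
    {𝒞 : Type u} [Category.{v} 𝒞] [Preadditive 𝒞] [CategoryTheory.Linear k 𝒞]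
    [HasZeroObject 𝒞] [HasBinaryBiproducts 𝒞] [EssentiallySmall.{v} 𝒞]
    (E' : ExactStructure 𝒞') (E : ExactStructure 𝒞)
    (hFrob' : IsFrobenius E') (hFrob : IsFrobenius E)
    (homFin' : ∀ A B : 𝒞', Finite (A ⟶ B)) (homFin : ∀ A B : 𝒞, Finite (A ⟶ B))
    (F : 𝒞' ⥤ 𝒞) [F.Additive] [F.Full] [F.Faithful]
    (hexact : ∀ {X Y Z : 𝒞'} (i : X ⟶ Y) (p : Y ⟶ Z), E'.conf i p → E.conf (F.map i) (F.map p))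
    (hproj : ∀ P : 𝒞', E'.Proj P → E.Proj (F.obj P))
    (hm' : HallMul E') (hm : HallMul E) :
    Function.Injective (hallMap F) ∧
    (∀ x y, hallMap F (hm'.mul x y) = hm.mul (hallMap F x) (hallMap F y)) := by
  have hskel : Function.Injective (skelMap F) := skelMap_injective F
  constructor
  · intro x y hxy
    apply Finsupp.mapDomain_injective hskel
    simpa only [hallMap, Finsupp.lmapDomain_apply] using hxy
  · have key : ∀ A C : 𝒞',
        hallMap F (hm'.mul (hallBasis A) (hallBasis C)) =
          hm.mul (hallMap F (hallBasis A)) (hallMap F (hallBasis C)) := by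
      intro A C
      rw [hallMap_basis F A, hallMap_basis F C]
      apply Finsupp.ext
      intro δ
      obtain ⟨D, hD⟩ := @Quotient.exists_rep _ (isIsomorphicSetoid 𝒞) δ
      rw [← hD]
      have hRHS : (hm.mul (hallBasis (F.obj A)) (hallBasis (F.obj C)))
          (Quotient.mk (isIsomorphicSetoid 𝒞) D) = hallCoeff E (F.obj A) (F.obj C) D :=
        hm.mul_basis (F.obj A) (F.obj C) D
      rw [hRHS]
      show Finsupp.lmapDomain ℚ ℚ (skelMap F) (hm'.mul (hallBasis A) (hallBasis C))
          (Quotient.mk (isIsomorphicSetoid 𝒞) D) = hallCoeff E (F.obj A) (F.obj C) D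
      rw [Finsupp.lmapDomain_apply]
      by_cases hD2 : ∃ M : 𝒞', Nonempty (D ≅ F.obj M)
      · obtain ⟨B, ⟨isoD⟩⟩ := hD2
        have hskelD : Quotient.mk (isIsomorphicSetoid 𝒞) D = skelMap F (skel B) := by
          rw [skelMap_skel]
          exact Quotient.sound ⟨isoD⟩
        rw [hskelD, Finsupp.mapDomain_apply hskel]
        have hb' : hm'.mul (hallBasis A) (hallBasis C) (skel B) = hallCoeff E' A C B :=
          hm'.mul_basis A C B
        rw [hb']
        unfold hallCoeff
        rw [ext1CardWith_map F hFrob' hFrob hexact hproj A C B,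
          homCard_map F A C,
          ext1CardWith_congr E (F.obj A) (F.obj C) (isoD.symm : F.obj B ≅ D)]
      · erw [Finsupp.mapDomain_notin_range]
        · have hzero : ext1CardWith E (F.obj A) (F.obj C) D = 0 :=
            ext1CardWith_zero F hFrob' hFrob hexact hproj A C D
              (fun M hiso => hD2 ⟨M, hiso⟩)
          unfold hallCoeff
          rw [hzero]
          simp
        · rintro ⟨a, ha⟩
          obtain ⟨M, hM⟩ := @Quotient.exists_rep _ (isIsomorphicSetoid 𝒞') a
          rw [← hM] at ha
          have ha2 : skel (F.obj M) = Quotient.mk (isIsomorphicSetoid 𝒞) D := by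
            rw [← skelMap_skel F M]; exact ha
          have hne : Nonempty (F.obj M ≅ D) := Quotient.exact ha2
          exact hD2 ⟨M, ⟨hne.some.symm⟩⟩
    have heq : (hm'.mul.compr₂ (hallMap F)) =
        ((hm.mul.comp (hallMap F)).compl₂ (hallMap F)) := by
      apply Finsupp.lhom_ext
      intro a r
      apply Finsupp.lhom_ext
      intro c s
      obtain ⟨A0, ha⟩ := @Quotient.exists_rep _ (isIsomorphicSetoid 𝒞') a
      obtain ⟨C0, hc⟩ := @Quotient.exists_rep _ (isIsomorphicSetoid 𝒞') c
      have h1 : (Finsupp.single a r : IsoCl 𝒞' →₀ ℚ) = r • hallBasis A0 := by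
        unfold hallBasis skel
        erw [Finsupp.smul_single_one, ha]
      have h2 : (Finsupp.single c s : IsoCl 𝒞' →₀ ℚ) = s • hallBasis C0 := by
        unfold hallBasis skel
        erw [Finsupp.smul_single_one, hc]
      show (hm'.mul.compr₂ (hallMap F)) (Finsupp.single a r) (Finsupp.single c s) =
        ((hm.mul.comp (hallMap F)).compl₂ (hallMap F)) (Finsupp.single a r) (Finsupp.single c s)
      rw [h1, h2]
      simp only [LinearMap.compr₂_apply, LinearMap.compl₂_apply, LinearMap.comp_apply,
        map_smul, LinearMap.smul_apply]
      rw [key A0 C0]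
    intro x y
    have hxy := LinearMap.congr_fun (LinearMap.congr_fun heq x) y
    simpa only [LinearMap.compr₂_apply, LinearMap.compl₂_apply, LinearMap.comp_apply] using hxy


end HallPaper
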